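/- arXiv:1804.06058 — 3 statements merged into one kernel-verified Lean document; each statement's English description precedes it below -/
import Mathlib

section
/- Let C be an F₂[U]-chain complex of width at least 2Δ with Δ ≥ 1 (every nonzero term of the differential is divisible by U^Δ), and let σ ∈ C be a cycle not divisible by U. Then the classes [U^i σ] for 0 ≤ i < Δ are nonzero in H_*(C), and the class [σ] is not in the image of multiplication by U on H_*(C). -/
/-!
Let `C` be a finitely generated free `F₂[U]`-chain complex of width at least `2Δ`
(every value of the differential is divisible by `U^Δ`), `Δ ≥ 1`, and let
`σ ∈ C` be a cycle not divisible by `U`.  Then the classes `[U^i σ]` for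
`0 ≤ i < Δ` are nonzero in homology (i.e. `U^i σ` is not a boundary), and `[σ]`
is not in the image of multiplication by `U` on homology (i.e. for every cycle
`y`, `σ + U·y` is not a boundary; coefficients are in `F₂`, so `-` is `+`).
-/

open Polynomial

noncomputable section

theorem stmt9 (ι : Type) [Fintype ι] (Δ : ℕ) (hΔ : 1 ≤ Δ)
    (d : (ι → Polynomial (ZMod 2)) →ₗ[Polynomial (ZMod 2)] (ι → Polynomial (ZMod 2)))
    (hd2 : ∀ v, d (d v) = 0)
    (hwidth : ∀ v, ∃ w, d v = (X : Polynomial (ZMod 2)) ^ Δ • w)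
    (σ : ι → Polynomial (ZMod 2))
    (hσcycle : d σ = 0)
    (hσU : ¬ ∃ τ, σ = (X : Polynomial (ZMod 2)) • τ) :
    (∀ i < Δ, ¬ ∃ v, d v = (X : Polynomial (ZMod 2)) ^ i • σ) ∧
    (∀ y, d y = 0 → ¬ ∃ v, d v = σ + (X : Polynomial (ZMod 2)) • y) := by
  have hXne : (X : Polynomial (ZMod 2)) ≠ 0 := X_ne_zero
  constructor
  · rintro i hi ⟨v, hv⟩
    obtain ⟨w, hw⟩ := hwidth v
    obtain ⟨k, hk⟩ : ∃ k, Δ = i + 1 + k := ⟨Δ - i - 1, by omega⟩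
    apply hσU
    refine ⟨(X : Polynomial (ZMod 2)) ^ k • w, ?_⟩
    funext j
    have h : (X : Polynomial (ZMod 2)) ^ i * σ j = X ^ Δ * w j := by
      have := congrFun (hv ▸ hw : (X : Polynomial (ZMod 2)) ^ i • σ = X ^ Δ • w) j
      simpa using this
    have h2 : (X : Polynomial (ZMod 2)) ^ i * σ j
        = X ^ i * (X * (X ^ k * w j)) := by
      rw [h, hk]; ring
    have := mul_left_cancel₀ (pow_ne_zero i hXne) h2
    simpa using this
  · rintro y hy ⟨v, hv⟩
    obtain ⟨w, hw⟩ := hwidth v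
    obtain ⟨k, hk⟩ : ∃ k, Δ = 1 + k := ⟨Δ - 1, by omega⟩
    apply hσU
    refine ⟨(X : Polynomial (ZMod 2)) ^ k • w - y, ?_⟩
    funext j
    have h : σ j + X * y j = (X : Polynomial (ZMod 2)) ^ Δ * w j := by
      have := congrFun (hv ▸ hw : σ + (X : Polynomial (ZMod 2)) • y = X ^ Δ • w) j
      simpa using this
    have : σ j = X * (X ^ k * w j - y j) := by
      have h' : σ j = (X : Polynomial (ZMod 2)) ^ Δ * w j - X * y j := by
        rw [← h]; ring
      rw [h', hk]; ring
    simpa using this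
end
end

section
/- For the complex Σ_n representing the same-sign sum X_{i₁} + ... + X_{iₙ} (as above), the free part of H_*(Σ_n) is a single copy of F₂[U] generated by the class [e₀], and U⁻¹H_*(Σ_n) ≅ F₂[U,U⁻¹]. -/
/-!
For the complex `Σ_n` representing the same-sign sum `X_{i₁} + ⋯ + X_{iₙ}`
(same conventions as for the torsion computation: zero-based `iL : Fin n → ℕ`,
module `(Fin (n+1) → F₂[U]) × (Fin n → F₂[U])`), the free part of `H_*(Σ_n)`,
i.e. the quotient of homology by its `U`-torsion submodule, is a single copy of
`F₂[U]` generated by the class of `e₀`; and `U⁻¹H_*(Σ_n) ≅ F₂[U, U⁻¹]`.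
-/

open Polynomial

noncomputable section

abbrev Hmlgy {R M : Type} [CommRing R] [AddCommGroup M] [Module R M] (d : M →ₗ[R] M) :=
  ↥(LinearMap.ker d) ⧸ (Submodule.comap (LinearMap.ker d).subtype (LinearMap.range d))

private abbrev RR := Polynomial (ZMod 2)

private lemma char2_eq_of_add_eq_zero (p q : RR) (h : p + q = 0) : p = q := by
  calc p = p + (q + q) := by rw [CharTwo.add_self_eq_zero, add_zero]
  _ = (p + q) + q := by ring
  _ = q := by rw [h, zero_add]

/-- If a surjection `Φ : H → RR` has kernel killed by a power of `X`, then the quotient of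
`H` by its torsion is identified with `RR` via `Φ`. -/
private lemma free_part {H : Type} [AddCommGroup H] [Module RR H] (Φ : H →ₗ[RR] RR)
    (hsurj : Function.Surjective Φ) (N : ℕ)
    (hker : ∀ x, Φ x = 0 → (X : RR) ^ N • x = 0) :
    ∃ ψ : (H ⧸ Submodule.torsion RR H) ≃ₗ[RR] RR,
      ∀ x : H, ψ (Submodule.Quotient.mk x) = Φ x := by
  have hTor : Submodule.torsion RR H = LinearMap.ker Φ := by
    apply le_antisymm
    · rintro x ⟨⟨a, ha⟩, hax⟩
      have h : a • Φ x = 0 := by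
        rw [← map_smul]
        simp only [Submonoid.smul_def] at hax
        rw [hax, map_zero]
      rw [LinearMap.mem_ker]
      rcases smul_eq_zero.mp h with h' | h'
      · exact absurd h' (nonZeroDivisors.ne_zero ha)
      · exact h'
    · intro x hx
      rw [Submodule.mem_torsion_iff]
      exact ⟨⟨(X : RR) ^ N, mem_nonZeroDivisors_of_ne_zero (pow_ne_zero N X_ne_zero)⟩,
        hker x (LinearMap.mem_ker.mp hx)⟩
  set ψ₀ : (H ⧸ Submodule.torsion RR H) →ₗ[RR] RR :=
    Submodule.liftQ _ Φ (le_of_eq hTor) with hψ₀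
  have hψ₀inj : Function.Injective ψ₀ := by
    rw [← LinearMap.ker_eq_bot]
    exact Submodule.ker_liftQ_eq_bot _ _ _ (le_of_eq hTor.symm)
  have hψ₀surj : Function.Surjective ψ₀ := by
    intro p
    obtain ⟨x, hx⟩ := hsurj p
    exact ⟨Submodule.Quotient.mk x, by rwa [hψ₀, Submodule.liftQ_apply]⟩
  refine ⟨LinearEquiv.ofBijective ψ₀ ⟨hψ₀inj, hψ₀surj⟩, fun x => ?_⟩
  show ψ₀ _ = Φ x
  rw [hψ₀, Submodule.liftQ_apply]

/-- If a surjection `Φ : H → RR` has kernel killed by a power of `X`, it becomes an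
isomorphism after inverting `X`. -/
private lemma loc_part {H : Type} [AddCommGroup H] [Module RR H] (Φ : H →ₗ[RR] RR)
    (hsurj : Function.Surjective Φ) (N : ℕ)
    (hker : ∀ x, Φ x = 0 → (X : RR) ^ N • x = 0) :
    Nonempty
      (LocalizedModule (Submonoid.powers (X : RR)) H ≃ₗ[RR]
       LocalizedModule (Submonoid.powers (X : RR)) RR) := by
  set S := Submonoid.powers (X : RR) with hS
  set F : LocalizedModule S H →ₗ[RR] LocalizedModule S RR :=
    IsLocalizedModule.map S (LocalizedModule.mkLinearMap S H)
      (LocalizedModule.mkLinearMap S RR) Φ with hF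
  have hFmk : ∀ (m : H) (s : S),
      F (LocalizedModule.mk m s) = LocalizedModule.mk (Φ m) s :=
    fun m s => IsLocalizedModule.map_LocalizedModules S Φ m s
  have hFsurj : Function.Surjective F :=
    IsLocalizedModule.map_surjective S _ _ Φ hsurj
  have hFker : ∀ x, F x = 0 → x = 0 := by
    intro x hx
    induction x using LocalizedModule.induction_on with
    | h m s =>
      rw [hFmk] at hx
      rw [← LocalizedModule.zero_mk (1 : S), LocalizedModule.mk_eq] at hx
      obtain ⟨t, ht⟩ := hx
      simp only [one_smul, smul_zero] at ht
      have hΦtm : Φ ((t : RR) • m) = 0 := by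
        rw [map_smul, smul_eq_mul]
        simpa [Submonoid.smul_def, smul_eq_mul] using ht
      have hkill := hker _ hΦtm
      rw [← LocalizedModule.zero_mk (1 : S), LocalizedModule.mk_eq]
      refine ⟨⟨(X : RR) ^ N, Submonoid.pow_mem S (Submonoid.mem_powers X) _⟩ * t, ?_⟩
      simp only [one_smul, smul_zero, Submonoid.coe_mul, Submonoid.smul_def]
      rw [mul_smul]
      simpa [Submonoid.smul_def] using hkill
  have hFinj : Function.Injective F := by
    rw [← LinearMap.ker_eq_bot]
    exact (Submodule.eq_bot_iff _).mpr fun x hx => hFker x (LinearMap.mem_ker.mp hx)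
  exact ⟨LinearEquiv.ofBijective F ⟨hFinj, hFsurj⟩⟩

set_option maxHeartbeats 1000000 in
theorem stmt13 (n : ℕ) (hn : 0 < n) (iL : Fin n → ℕ)
    (hi1 : ∀ k, 1 ≤ iL k) (hmono : ∀ j k : Fin n, j ≤ k → iL k ≤ iL j)
    (d : ((Fin (n + 1) → Polynomial (ZMod 2)) × (Fin n → Polynomial (ZMod 2)))
      →ₗ[Polynomial (ZMod 2)]
      ((Fin (n + 1) → Polynomial (ZMod 2)) × (Fin n → Polynomial (ZMod 2))))
    (hd : ∀ v, d v =
      (fun j : Fin (n + 1) => if h : (j : ℕ) < n then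
          X ^ (iL ⟨(j : ℕ), h⟩) * (v.1 (Fin.succ ⟨(j : ℕ), h⟩) +
            if h2 : (j : ℕ) + 1 < n then v.2 ⟨(j : ℕ) + 1, h2⟩ else 0)
        else 0,
       fun k : Fin n =>
          X ^ (iL k) * (v.1 (Fin.succ k) +
            if h2 : (k : ℕ) + 1 < n then v.2 ⟨(k : ℕ) + 1, h2⟩ else 0)))
    (e₀ : (Fin (n + 1) → Polynomial (ZMod 2)) × (Fin n → Polynomial (ZMod 2)))
    (he₀ : e₀ = (Pi.single 0 1, 0)) :
    ∃ hcyc : e₀ ∈ LinearMap.ker d,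
    (∃ ψ : (Hmlgy d ⧸ Submodule.torsion (Polynomial (ZMod 2)) (Hmlgy d))
        ≃ₗ[Polynomial (ZMod 2)] Polynomial (ZMod 2),
      ψ (Submodule.Quotient.mk
          ((Submodule.Quotient.mk (⟨e₀, hcyc⟩ : LinearMap.ker d)) : Hmlgy d)) = 1) ∧
    Nonempty
      (LocalizedModule (Submonoid.powers (X : Polynomial (ZMod 2))) (Hmlgy d)
        ≃ₗ[Polynomial (ZMod 2)]
       LocalizedModule (Submonoid.powers (X : Polynomial (ZMod 2))) (Polynomial (ZMod 2))) := by
  have hXpow : ∀ m : ℕ, (X : RR) ^ m ≠ 0 := fun m => pow_ne_zero m X_ne_zero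
  -- kernel description
  have hker : ∀ v : (Fin (n + 1) → RR) × (Fin n → RR), v ∈ LinearMap.ker d ↔ ∀ k : Fin n,
      v.1 (Fin.succ k) + (if h2 : (k : ℕ) + 1 < n then v.2 ⟨(k : ℕ) + 1, h2⟩ else 0) = 0 := by
    intro v
    rw [LinearMap.mem_ker, hd]
    constructor
    · intro h k
      have h2 := congrFun (congrArg Prod.snd h) k
      simp only [Prod.snd_zero, Pi.zero_apply] at h2
      rcases mul_eq_zero.mp h2 with h3 | h3
      · exact absurd h3 (hXpow _)
      · exact h3
    · intro h
      refine Prod.ext (funext fun j => ?_) (funext fun k => ?_)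
      · dsimp only
        by_cases hj : (j : ℕ) < n
        · rw [dif_pos hj, h ⟨(j : ℕ), hj⟩, mul_zero]
          rfl
        · rw [dif_neg hj]; rfl
      · dsimp only
        rw [h k, mul_zero]; rfl
  -- the cycle e₀
  have hcyc : e₀ ∈ LinearMap.ker d := by
    rw [hker]
    intro k
    rw [he₀]
    simp only [Pi.single_eq_of_ne (Fin.succ_ne_zero k)]
    simp
  -- the map φ
  set φ : ((Fin (n + 1) → RR) × (Fin n → RR)) →ₗ[RR] RR :=
    { toFun := fun v => v.1 0 + v.2 ⟨0, hn⟩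
      map_add' := fun a b => by
        simp only [Prod.fst_add, Prod.snd_add, Pi.add_apply]; ring
      map_smul' := fun r a => by
        simp only [Prod.smul_fst, Prod.smul_snd, Pi.smul_apply, smul_eq_mul, RingHom.id_apply]
        ring } with hφ
  have hφd : ∀ v : (Fin (n + 1) → RR) × (Fin n → RR), φ (d v) = 0 := by
    intro v
    simp only [hφ, LinearMap.coe_mk, AddHom.coe_mk, hd]
    rw [dif_pos (show ((0 : Fin (n+1)) : ℕ) < n from hn)]
    exact CharTwo.add_self_eq_zero _
  have hφe₀ : φ e₀ = 1 := by
    rw [he₀]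
    simp only [hφ, LinearMap.coe_mk, AddHom.coe_mk, Pi.single_eq_same, Pi.zero_apply, add_zero]
  -- Φ on homology
  set K := Submodule.comap (LinearMap.ker d).subtype (LinearMap.range d) with hK
  have hKle : K ≤ LinearMap.ker (φ ∘ₗ (LinearMap.ker d).subtype) := by
    rintro ⟨v, hv⟩ hmem
    obtain ⟨u, hu⟩ := hmem
    simp only [LinearMap.mem_ker, LinearMap.coe_comp, Function.comp_apply,
      Submodule.coe_subtype]
    rw [show v = d u from hu.symm]
    exact hφd u
  set Φ : Hmlgy d →ₗ[RR] RR := Submodule.liftQ K (φ ∘ₗ (LinearMap.ker d).subtype) hKle with hΦ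
  have hΦmk : ∀ x : LinearMap.ker d, Φ (Submodule.Quotient.mk x) = φ (x : _) :=
    fun x => Submodule.liftQ_apply K _ x
  have hΦsurj : Function.Surjective Φ := by
    intro p
    refine ⟨p • Submodule.Quotient.mk (⟨e₀, hcyc⟩ : LinearMap.ker d), ?_⟩
    rw [map_smul, hΦmk, hφe₀, smul_eq_mul, mul_one]
  -- key: kernel of Φ is killed by X ^ (iL ⟨0, hn⟩)
  have hX0 : ∀ x : Hmlgy d, Φ x = 0 → (X : RR) ^ (iL ⟨0, hn⟩) • x = 0 := by
    intro x hx
    obtain ⟨⟨v, hv⟩, rfl⟩ := Submodule.Quotient.mk_surjective K x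
    rw [hΦmk] at hx
    have hv0 : v.1 0 = v.2 ⟨0, hn⟩ := char2_eq_of_add_eq_zero _ _ hx
    have hkerv := (hker v).mp hv
    have hv2c : ∀ (a b : Fin n), (a : ℕ) = (b : ℕ) → v.2 a = v.2 b := by
      intro a b hab; rw [Fin.ext hab]
    have hv1c : ∀ (a b : Fin (n+1)), (a : ℕ) = (b : ℕ) → v.1 a = v.1 b := by
      intro a b hab; rw [Fin.ext hab]
    -- v.1 j = v.2 j for j < n
    have hcomp : ∀ (j : Fin (n+1)) (h : (j : ℕ) < n), v.1 j = v.2 ⟨(j : ℕ), h⟩ := by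
      intro j h
      rcases Nat.eq_zero_or_pos (j : ℕ) with h0 | h0
      · calc v.1 j = v.1 0 := hv1c _ _ (by simpa using h0)
          _ = v.2 ⟨0, hn⟩ := hv0
          _ = v.2 ⟨(j : ℕ), h⟩ := hv2c _ _ (by simpa using h0.symm)
      · have hmn : (j : ℕ) - 1 < n := by omega
        have hthis := hkerv ⟨(j : ℕ) - 1, hmn⟩
        have hcond : ((⟨(j : ℕ) - 1, hmn⟩ : Fin n) : ℕ) + 1 < n := by
          show (j : ℕ) - 1 + 1 < n; omega
        rw [dif_pos hcond] at hthis
        have heq := char2_eq_of_add_eq_zero _ _ hthis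
        calc v.1 j = v.1 (Fin.succ ⟨(j : ℕ) - 1, hmn⟩) := by
              refine hv1c _ _ ?_
              show (j : ℕ) = (j : ℕ) - 1 + 1
              omega
          _ = v.2 ⟨((⟨(j : ℕ) - 1, hmn⟩ : Fin n) : ℕ) + 1, hcond⟩ := heq
          _ = v.2 ⟨(j : ℕ), h⟩ := by
              refine hv2c _ _ ?_
              show (j : ℕ) - 1 + 1 = (j : ℕ)
              omega
    -- v.1 at the last index is 0
    have hlast : ∀ (j : Fin (n+1)), ¬ ((j : ℕ) < n) → v.1 j = 0 := by
      intro j hj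
      have hjlt := j.isLt
      have hmn : n - 1 < n := by omega
      have hthis := hkerv ⟨n - 1, hmn⟩
      have hcond : ¬ (((⟨n - 1, hmn⟩ : Fin n) : ℕ) + 1 < n) := by
        show ¬ (n - 1 + 1 < n); omega
      rw [dif_neg hcond, add_zero] at hthis
      calc v.1 j = v.1 (Fin.succ ⟨n - 1, hmn⟩) := by
            refine hv1c _ _ ?_
            show (j : ℕ) = n - 1 + 1
            omega
        _ = 0 := hthis
    -- construct the preimage
    set u : (Fin (n + 1) → RR) × (Fin n → RR) := (Fin.cases (motive := fun _ => RR) 0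
        (fun k => X ^ (iL ⟨0, hn⟩ - iL k) * v.2 k), 0) with hu
    have hu1 : ∀ k : Fin n, u.1 (Fin.succ k) = X ^ (iL ⟨0, hn⟩ - iL k) * v.2 k := by
      intro k; simp [hu]
    have hcalc : ∀ k : Fin n,
        X ^ (iL k) * (u.1 (Fin.succ k) +
          (if h2 : (k : ℕ) + 1 < n then u.2 ⟨(k : ℕ) + 1, h2⟩ else 0))
        = X ^ (iL ⟨0, hn⟩) * v.2 k := by
      intro k
      have hle : iL k ≤ iL ⟨0, hn⟩ := hmono ⟨0, hn⟩ k (by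
        rw [Fin.le_def]; exact Nat.zero_le _)
      have h2z : (if h2 : (k : ℕ) + 1 < n then u.2 ⟨(k : ℕ) + 1, h2⟩ else 0) = 0 := by
        split <;> simp [hu]
      rw [hu1, h2z, add_zero, ← mul_assoc, ← pow_add, Nat.add_sub_cancel' hle]
    have hdu : d u = (X : RR) ^ (iL ⟨0, hn⟩) • v := by
      rw [hd]
      refine Prod.ext (funext fun j => ?_) (funext fun k => ?_)
      · dsimp only
        by_cases hj : (j : ℕ) < n
        · rw [dif_pos hj, hcalc ⟨(j : ℕ), hj⟩]
          show X ^ iL ⟨0, hn⟩ * v.2 ⟨(j : ℕ), hj⟩ = (X ^ iL ⟨0, hn⟩ • v).1 j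
          rw [← hcomp j hj]
          simp only [Prod.smul_fst, Pi.smul_apply, smul_eq_mul]
        · rw [dif_neg hj]
          show (0 : RR) = (X ^ iL ⟨0, hn⟩ • v).1 j
          simp only [Prod.smul_fst, Pi.smul_apply, smul_eq_mul]
          rw [hlast j hj, mul_zero]
      · dsimp only
        rw [hcalc k]
        show X ^ iL ⟨0, hn⟩ * v.2 k = (X ^ iL ⟨0, hn⟩ • v).2 k
        simp only [Prod.smul_snd, Pi.smul_apply, smul_eq_mul]
    have hmem : ((X : RR) ^ (iL ⟨0, hn⟩) • (⟨v, hv⟩ : LinearMap.ker d)) ∈ K := by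
      refine Submodule.mem_comap.mpr ⟨u, ?_⟩
      rw [hdu]
      rfl
    rw [← Submodule.Quotient.mk_smul, Submodule.Quotient.mk_eq_zero]
    exact hmem
  obtain ⟨ψ, hψ⟩ := free_part Φ hΦsurj (iL ⟨0, hn⟩) hX0
  refine ⟨hcyc, ⟨ψ, ?_⟩, loc_part Φ hΦsurj (iL ⟨0, hn⟩) hX0⟩
  rw [hψ, hΦmk, hφe₀]
end
end

section
/- Recoverability of the decomposition: let X = Σ_k c_k X_{i_k} be maximally simplified with i₁ > ... > i_m the distinct lengths and multiplicities a_l (the number of towers of length l, with common sign per length since X is maximally simplified). Then the graded F₂[U]-module H(X) produced by the concatenation algorithm determines the multiset {(i_k, c_k)}: distinct inputs (maximally simplified sign-coefficient sequences) produce non-isomorphic graded modules H(X) (given the normalization that either the top tower's head is in grading 0 with positive sign or grading 1 with negative sign). -/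
/-!
Recoverability of the decomposition.  A maximally simplified linear combination
`X = Σ_k c_k X_{i_k}` is encoded as a list `L` of pairs `(i_k, c_k)` with
`i_k ≥ 1`, `c_k = ±1`, sorted with weakly decreasing lengths, and with a common
sign for towers of equal length (no cancelling pairs).  The graded `F₂[U]`-module
`H(X)` produced by the concatenation algorithm is a direct sum of torsion towers
`T_d(l)`, and its graded isomorphism class is recorded as the multiset of pairs
`(top grading, length)` computed by `towerModule` below (a downwards tower of
length `l` with head at grading `h` has top grading `h`; an upwards one has top
grading `tail = h + 2(l-1)`; the first head is at grading `0` if `c₁ = +1` and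
`1` if `c₁ = -1`, and subsequent heads follow the algorithm of Theorem 1.1).
Claim: distinct maximally simplified inputs produce non-isomorphic graded
modules, i.e. `towerModule` is injective on valid inputs.
-/

noncomputable section

/-- Tail grading of a tower of length `l`, sign `c`, with head at grading `h`. -/
def tailGr (h : ℤ) (l : ℕ) (c : ℤ) : ℤ := h - c * 2 * ((l : ℤ) - 1)

/-- Head grading of the next tower, given the previous tail `t` and the two signs. -/
def nextHead (t c c' : ℤ) : ℤ :=
  t + (if c = 1 ∧ c' = 1 then -1 else if c = -1 ∧ c' = -1 then 1 else 0)

/-- The multiset of (top grading, length) pairs of the towers, given the head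
grading of the first tower. -/
def towersAux : ℤ → List (ℕ × ℤ) → Multiset (ℤ × ℕ)
  | _, [] => 0
  | h, (l, c) :: rest =>
      ((if c = 1 then h else tailGr h l c), l) ::ₘ
        towersAux
          (match rest with
           | [] => 0
           | (_, c') :: _ => nextHead (tailGr h l c) c c') rest

/-- The graded module `H(X)` (as a multiset of towers), with the normalization
that the first head is at grading `0` for a positive first sign and `1` for a
negative one. -/
def towerModule (L : List (ℕ × ℤ)) : Multiset (ℤ × ℕ) :=
  towersAux (match L with | [] => 0 | (_, c) :: _ => if c = 1 then 0 else 1) L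

/-- A valid input: positive lengths, signs `±1`, weakly decreasing lengths, and
maximally simplified (equal lengths have equal signs). -/
def validInput (L : List (ℕ × ℤ)) : Prop :=
  (∀ p ∈ L, 1 ≤ p.1 ∧ (p.2 = 1 ∨ p.2 = -1)) ∧
  L.Chain' (fun p q => q.1 ≤ p.1) ∧
  (∀ p ∈ L, ∀ q ∈ L, p.1 = q.1 → p.2 = q.2)

/-! ### Auxiliary definitions -/

def sg : List (ℕ × ℤ) → ℤ
  | [] => 1
  | (_, c) :: _ => c

def headOf (h c : ℤ) : ℤ := if c = 1 then h else h + 1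

def top0 (h c : ℤ) (l : ℕ) : ℤ := if c = 1 then h else h + 2*l - 1

def blockTops (h c : ℤ) (l : ℕ) : ℕ → Multiset (ℤ × ℕ)
  | 0 => 0
  | k+1 => (top0 h c l, l) ::ₘ blockTops (h - c*(2*(l:ℤ)-1)) c l k

/-! ### Basic lemmas about `towersAux` -/

lemma snd_towersAux (L : List (ℕ × ℤ)) : ∀ h, (towersAux h L).map Prod.snd = ↑(L.map Prod.fst) := by
  induction L with
  | nil => intro h; rfl
  | cons p rest ih =>
      intro h
      obtain ⟨l, c⟩ := p
      simp [towersAux, ih]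

lemma card_towersAux (L : List (ℕ × ℤ)) (h : ℤ) : (towersAux h L).card = L.length := by
  have := congrArg Multiset.card (snd_towersAux L h)
  simpa using this

lemma step (h c : ℤ) (l : ℕ) (rest : List (ℕ × ℤ)) (hc : c = 1 ∨ c = -1)
    (hrest : ∀ p ∈ rest, p.2 = 1 ∨ p.2 = -1) :
    towersAux (headOf h c) ((l, c) :: rest)
      = (top0 h c l, l) ::ₘ towersAux (headOf (h - c*(2*(l:ℤ)-1)) (sg rest)) rest := by
  cases rest with
  | nil =>
      rcases hc with rfl | rfl <;> simp [towersAux, headOf, top0, tailGr] <;> ring_nf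
  | cons q rest' =>
      obtain ⟨l', c'⟩ := q
      have hc' : c' = 1 ∨ c' = -1 := hrest (l', c') (by simp)
      rcases hc with rfl | rfl <;> rcases hc' with rfl | rfl <;>
        simp [towersAux, headOf, top0, tailGr, nextHead, sg] <;> ring_nf

lemma block (c : ℤ) (l : ℕ) (hc : c = 1 ∨ c = -1) :
    ∀ (k : ℕ) (h : ℤ) (rest : List (ℕ × ℤ)),
    (∀ p ∈ rest, p.2 = 1 ∨ p.2 = -1) →
    towersAux (headOf h c) (List.replicate (k+1) (l, c) ++ rest)
      = blockTops h c l (k+1)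
        + towersAux (headOf (h - c*(2*(l:ℤ)-1)*(k+1)) (sg rest)) rest := by
  intro k
  induction k with
  | zero =>
      intro h rest hrest
      rw [show List.replicate 1 (l,c) ++ rest = (l,c) :: rest from rfl,
        step h c l rest hc hrest]
      simp [blockTops]
  | succ k ih =>
      intro h rest hrest
      have hs : ∀ p ∈ List.replicate (k+1) (l,c) ++ rest, p.2 = 1 ∨ p.2 = -1 := by
        intro p hp
        rcases List.mem_append.1 hp with hp | hp
        · rw [List.eq_of_mem_replicate hp]; exact hc
        · exact hrest p hp
      have hsg : sg (List.replicate (k+1) (l,c) ++ rest) = c := rfl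
      rw [show List.replicate (k+2) (l,c) ++ rest = (l,c) :: (List.replicate (k+1) (l,c) ++ rest) from rfl,
        step h c l _ hc hs, hsg, ih (h - c*(2*(l:ℤ)-1)) rest hrest]
      rw [show blockTops h c l (k+2) = (top0 h c l, l) ::ₘ blockTops (h - c*(2*(l:ℤ)-1)) c l (k+1) from rfl]
      rw [Multiset.cons_add]
      congr 3
      push_cast
      ring_nf

lemma mem_blockTops_neg (l : ℕ) (hl : 1 ≤ l) :
    ∀ (k : ℕ) (h : ℤ) (p : ℤ × ℕ), p ∈ blockTops h (-1) l k → h < p.1 ∧ p.2 = l := by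
  intro k
  induction k with
  | zero => intro h p hp; simp [blockTops] at hp
  | succ k ih =>
      intro h p hp
      rw [show blockTops h (-1) l (k+1) = (top0 h (-1) l, l) ::ₘ blockTops (h - (-1)*(2*(l:ℤ)-1)) (-1) l k from rfl] at hp
      rcases Multiset.mem_cons.1 hp with rfl | hp
      · constructor
        · simp only [top0, if_neg (by norm_num : (-1 : ℤ) ≠ 1)]
          have : (1:ℤ) ≤ (l:ℤ) := by exact_mod_cast hl
          linarith
        · rfl
      · obtain ⟨h1, h2⟩ := ih _ p hp
        refine ⟨?_, h2⟩
        have : (1:ℤ) ≤ (l:ℤ) := by exact_mod_cast hl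
        linarith

/-! ### Validity lemmas -/

lemma valid_tail (p : ℕ × ℤ) (T : List (ℕ × ℤ)) (hv : validInput (p :: T)) : validInput T := by
  obtain ⟨h1, h2, h3⟩ := hv
  exact ⟨fun q hq => h1 q (List.mem_cons_of_mem _ hq),
    (List.isChain_cons.1 h2).2,
    fun a ha b hb => h3 a (List.mem_cons_of_mem _ ha) b (List.mem_cons_of_mem _ hb)⟩

lemma head_le (l : ℕ) (c : ℤ) (T : List (ℕ × ℤ)) (hv : validInput ((l,c) :: T)) :
    ∀ p ∈ (l,c) :: T, p.1 ≤ l := by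
  haveI : IsTrans (ℕ × ℤ) (fun p q : ℕ × ℤ => q.1 ≤ p.1) :=
    ⟨fun _ _ _ h1 h2 => le_trans h2 h1⟩
  have hpw := List.isChain_iff_pairwise.1 hv.2.1
  intro p hp
  rcases List.mem_cons.1 hp with rfl | hp
  · exact le_rfl
  · exact (List.pairwise_cons.1 hpw).1 p hp

lemma split_block (L : List (ℕ × ℤ)) (hv : validInput L) (l : ℕ) (c : ℤ)
    (hL : L.head? = some (l, c)) :
    ∃ k rest, L = List.replicate (k+1) (l, c) ++ rest ∧ (∀ p ∈ rest, p.1 < l) ∧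
      validInput rest := by
  induction L with
  | nil => simp at hL
  | cons p T ih =>
      have hp : p = (l, c) := by simpa using hL
      subst hp
      cases T with
      | nil => exact ⟨0, [], by simp, by simp, valid_tail _ _ hv⟩
      | cons q T' =>
          obtain ⟨l', c'⟩ := q
          by_cases hl : l' = l
          · subst hl
            have hcc : c' = c := by
              exact hv.2.2 (l', c') (by simp) (l', c) (by simp) rfl
            subst hcc
            obtain ⟨k, rest, heq, hlt, hvr⟩ :=
              ih (valid_tail _ _ hv) (by simp)
            exact ⟨k+1, rest, by rw [List.replicate_succ, List.cons_append, heq], hlt, hvr⟩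
          · haveI : IsTrans (ℕ × ℤ) (fun p q : ℕ × ℤ => q.1 ≤ p.1) :=
              ⟨fun _ _ _ h1 h2 => le_trans h2 h1⟩
            have hpw : List.Pairwise (fun p q => q.1 ≤ p.1) ((l,c) :: (l',c') :: T') :=
              List.isChain_iff_pairwise.1 hv.2.1
            have hle : l' ≤ l := by
              have := List.pairwise_cons.1 hpw
              exact this.1 (l', c') (by simp)
            have hlt' : l' < l := lt_of_le_of_ne hle hl
            refine ⟨0, (l',c') :: T', by simp, ?_, valid_tail _ _ hv⟩
            intro p hp
            rcases List.mem_cons.1 hp with rfl | hp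
            · exact hlt'
            · have hpw' := List.pairwise_cons.1 ((List.pairwise_cons.1 hpw).2)
              exact lt_of_le_of_lt (hpw'.1 p hp) hlt'

/-! ### Main induction -/

lemma snd_mem_towersAux (h : ℤ) (L : List (ℕ × ℤ)) (p : ℤ × ℕ) (hp : p ∈ towersAux h L) :
    p.2 ∈ L.map Prod.fst := by
  have : p.2 ∈ (towersAux h L).map Prod.snd := Multiset.mem_map_of_mem _ hp
  rw [snd_towersAux] at this
  simpa using this

lemma mix (h x y : ℤ) (l k₁ k₂ : ℕ) (hl : 1 ≤ l) (r₁ r₂ : List (ℕ × ℤ))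
    (hr₂ : ∀ p ∈ r₂, p.1 < l) :
    blockTops h 1 l (k₁+1) + towersAux x r₁ ≠ blockTops h (-1) l (k₂+1) + towersAux y r₂ := by
  intro he
  have hmem : ((h, l) : ℤ × ℕ) ∈ blockTops h 1 l (k₁+1) + towersAux x r₁ := by
    refine Multiset.mem_add.2 (Or.inl ?_)
    simp [blockTops, top0]
  rw [he] at hmem
  rcases Multiset.mem_add.1 hmem with hm | hm
  · exact absurd (mem_blockTops_neg l hl _ _ _ hm).1 (lt_irrefl h)
  · obtain ⟨q, hq, hq'⟩ := List.mem_map.1 (snd_mem_towersAux _ _ _ hm)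
    exact absurd hq' (ne_of_lt (hr₂ q hq))

lemma main_lemma : ∀ (n : ℕ) (L₁ L₂ : List (ℕ × ℤ)) (h : ℤ), L₁.length ≤ n →
    validInput L₁ → validInput L₂ →
    towersAux (headOf h (sg L₁)) L₁ = towersAux (headOf h (sg L₂)) L₂ → L₁ = L₂ := by
  intro n
  induction n with
  | zero =>
      intro L₁ L₂ h hlen hv₁ hv₂ heq
      have h1 : L₁ = [] := List.length_eq_zero_iff.1 (Nat.le_zero.1 hlen)
      subst h1
      have : L₂.length = 0 := by
        have := congrArg Multiset.card heq
        rw [card_towersAux, card_towersAux] at this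
        simpa using this.symm
      exact (List.length_eq_zero_iff.1 this).symm
  | succ n ih =>
      intro L₁ L₂ h hlen hv₁ hv₂ heq
      cases hL₁ : L₁ with
      | nil =>
          subst hL₁
          have : L₂.length = 0 := by
            have := congrArg Multiset.card heq
            rw [card_towersAux, card_towersAux] at this
            simpa using this.symm
          exact (List.length_eq_zero_iff.1 this).symm
      | cons p₁ T₁ =>
          subst hL₁
          cases hL₂ : L₂ with
          | nil =>
              subst hL₂
              have : (p₁ :: T₁).length = 0 := by
                have := congrArg Multiset.card heq
                rw [card_towersAux, card_towersAux] at this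
                simpa using this
              simp at this
          | cons p₂ T₂ =>
              subst hL₂
              obtain ⟨l₁, c₁⟩ := p₁
              obtain ⟨l₂, c₂⟩ := p₂
              -- multisets of lengths agree
              have hsnd : (↑((((l₁,c₁)) :: T₁).map Prod.fst) : Multiset ℕ)
                  = ↑(((l₂,c₂) :: T₂).map Prod.fst) := by
                rw [← snd_towersAux, ← snd_towersAux, heq]
              -- l₁ = l₂
              have hmax₁ : ∀ p ∈ (l₁,c₁) :: T₁, p.1 ≤ l₁ := head_le _ _ _ hv₁
              have hmax₂ : ∀ p ∈ (l₂,c₂) :: T₂, p.1 ≤ l₂ := head_le _ _ _ hv₂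
              have hl12 : l₁ = l₂ := by
                have m1 : l₁ ∈ (((l₂,c₂) :: T₂).map Prod.fst) := by
                  have : l₁ ∈ (↑(((l₂,c₂) :: T₂).map Prod.fst) : Multiset ℕ) := by
                    rw [← hsnd]; simp
                  simpa using this
                have m2 : l₂ ∈ ((((l₁,c₁)) :: T₁).map Prod.fst) := by
                  have : l₂ ∈ (↑((((l₁,c₁)) :: T₁).map Prod.fst) : Multiset ℕ) := by
                    rw [hsnd]; simp
                  simpa using this
                obtain ⟨q₁, hq₁, hq₁'⟩ := List.mem_map.1 m1
                obtain ⟨q₂, hq₂, hq₂'⟩ := List.mem_map.1 m2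
                exact le_antisymm (hq₁' ▸ hmax₂ q₁ hq₁) (hq₂' ▸ hmax₁ q₂ hq₂)
              subst hl12
              -- split into blocks
              obtain ⟨k₁, r₁, hsplit₁, hrlt₁, hvr₁⟩ := split_block _ hv₁ l₁ c₁ rfl
              obtain ⟨k₂, r₂, hsplit₂, hrlt₂, hvr₂⟩ := split_block _ hv₂ l₁ c₂ rfl
              have hc₁ : c₁ = 1 ∨ c₁ = -1 := (hv₁.1 (l₁,c₁) (by simp)).2
              have hc₂ : c₂ = 1 ∨ c₂ = -1 := (hv₂.1 (l₁,c₂) (by simp)).2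
              have hl1 : 1 ≤ l₁ := (hv₁.1 (l₁,c₁) (by simp)).1
              have hr₁s : ∀ p ∈ r₁, p.2 = 1 ∨ p.2 = -1 := fun p hp => (hvr₁.1 p hp).2
              have hr₂s : ∀ p ∈ r₂, p.2 = 1 ∨ p.2 = -1 := fun p hp => (hvr₂.1 p hp).2
              rw [hsplit₁] at heq hsnd hlen ⊢
              rw [hsplit₂] at heq hsnd ⊢
              have hsg₁ : sg (List.replicate (k₁+1) (l₁,c₁) ++ r₁) = c₁ := rfl
              have hsg₂ : sg (List.replicate (k₂+1) (l₁,c₂) ++ r₂) = c₂ := rfl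
              rw [hsg₁, hsg₂, block c₁ l₁ hc₁ k₁ h r₁ hr₁s,
                block c₂ l₁ hc₂ k₂ h r₂ hr₂s] at heq
              -- signs agree
              have hcc : c₁ = c₂ := by
                rcases hc₁ with rfl | rfl <;> rcases hc₂ with rfl | rfl
                · rfl
                · exact absurd heq (mix h _ _ l₁ k₁ k₂ hl1 r₁ r₂ hrlt₂)
                · exact absurd heq.symm (mix h _ _ l₁ k₂ k₁ hl1 r₂ r₁ hrlt₁)
                · rfl
              subst hcc
              -- multiplicities agree
              have hcnt := congrArg (Multiset.count l₁) hsnd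
              rw [Multiset.coe_count, Multiset.coe_count] at hcnt
              have e₁ : ((List.replicate (k₁+1) (l₁,c₁) ++ r₁).map Prod.fst).count l₁
                  = k₁+1 := by
                rw [List.map_append, List.count_append, List.map_replicate,
                  List.count_replicate_self]
                have h0 : (r₁.map Prod.fst).count l₁ = 0 := by
                  rw [List.count_eq_zero]
                  intro hm
                  obtain ⟨q, hq, hq'⟩ := List.mem_map.1 hm
                  exact absurd hq' (ne_of_lt (hrlt₁ q hq))
                omega
              have e₂ : ((List.replicate (k₂+1) (l₁,c₁) ++ r₂).map Prod.fst).count l₁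
                  = k₂+1 := by
                rw [List.map_append, List.count_append, List.map_replicate,
                  List.count_replicate_self]
                have h0 : (r₂.map Prod.fst).count l₁ = 0 := by
                  rw [List.count_eq_zero]
                  intro hm
                  obtain ⟨q, hq, hq'⟩ := List.mem_map.1 hm
                  exact absurd hq' (ne_of_lt (hrlt₂ q hq))
                omega
              have hk : k₁ = k₂ := by rw [e₁, e₂] at hcnt; omega
              subst hk
              -- cancel the common block and recurse
              have heq' : towersAux (headOf (h - c₁*(2*(l₁:ℤ)-1)*(k₁+1)) (sg r₁)) r₁
                  = towersAux (headOf (h - c₁*(2*(l₁:ℤ)-1)*(k₁+1)) (sg r₂)) r₂ :=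
                add_left_cancel heq
              have hlen' : r₁.length ≤ n := by
                simp only [List.length_append, List.length_replicate] at hlen
                omega
              rw [ih r₁ r₂ (h - c₁*(2*(l₁:ℤ)-1)*(k₁+1)) hlen' hvr₁ hvr₂ heq']

lemma towerModule_eq (L : List (ℕ × ℤ)) :
    towerModule L = towersAux (headOf 0 (sg L)) L := by
  cases L with
  | nil => rfl
  | cons p T =>
      obtain ⟨l, c⟩ := p
      by_cases hc : c = 1 <;> simp [towerModule, sg, headOf, hc]

theorem stmt18 (L₁ L₂ : List (ℕ × ℤ)) (h₁ : validInput L₁) (h₂ : validInput L₂)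
    (h : towerModule L₁ = towerModule L₂) : L₁ = L₂ := by
  refine main_lemma L₁.length L₁ L₂ 0 le_rfl h₁ h₂ ?_
  rw [← towerModule_eq, ← towerModule_eq, h]
end
end
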